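/- Let V = O₁ ∪ … ∪ O_L be a layered node set with bisubmodular, non-decreasing capacity functions ρ_l vanishing when either argument is empty, |O₁| = |O_L| = 1 with source S and destination D. Then the maximum value of f(S) over node-flows f equals the minimum cut: max{ f(S) : f a feasible node-flow } = min_{Ω ⊆ V, S∈Ω, D∉Ω} C(Ω). -/

import Mathlib

open Finset

section Aux

variable {V : Type*} [Fintype V] [DecidableEq V]

lemma inter_insert_right {A B : Finset V} {e : V} (h : e ∉ A) :
    A ∩ insert e B = A ∩ B := by
  ext x
  simp only [mem_inter, mem_insert]
  constructor
  · rintro ⟨h1, rfl | h2⟩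
    · exact absurd h1 h
    · exact ⟨h1, h2⟩
  · rintro ⟨h1, h2⟩; exact ⟨h1, Or.inr h2⟩

lemma insert_inter_left {A B : Finset V} {e : V} (h : e ∉ B) :
    insert e A ∩ B = A ∩ B := by
  rw [inter_comm, inter_insert_right h, inter_comm]

lemma insert_inter_both (A B : Finset V) (e : V) :
    insert e A ∩ insert e B = insert e (A ∩ B) := by
  ext x
  simp only [mem_inter, mem_insert]
  tauto

lemma insert_union_both (A B : Finset V) (e : V) :
    insert e A ∪ insert e B = insert e (A ∪ B) := by
  rw [Finset.insert_union, Finset.union_insert, insert_idem]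

/-- Frank's discrete sandwich theorem. -/
lemma sandwich : ∀ (n : ℕ) (E : Finset V) (p b : Finset V → ℝ), E.card = n →
    (∀ A B, A ⊆ E → B ⊆ E → p A + p B ≤ p (A ∪ B) + p (A ∩ B)) →
    (∀ A B, A ⊆ E → B ⊆ E → b (A ∪ B) + b (A ∩ B) ≤ b A + b B) →
    (∀ A, A ⊆ E → p A ≤ b A) → p ∅ = 0 → b ∅ = 0 →
    ∃ x : V → ℝ, ∀ A, A ⊆ E → p A ≤ ∑ a ∈ A, x a ∧ ∑ a ∈ A, x a ≤ b A := by
  intro n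
  induction n with
  | zero =>
    intro E p b hcard _ _ _ hp0 hb0
    have hE : E = ∅ := card_eq_zero.mp hcard
    subst hE
    exact ⟨0, fun A hA => by rw [Finset.subset_empty.mp hA]; simp [hp0, hb0]⟩
  | succ n ih =>
    intro E p b hcard hp hb hpb hp0 hb0
    obtain ⟨e, he⟩ : E.Nonempty := card_pos.mp (by omega)
    set E' := E.erase e with hE'
    have hE'card : E'.card = n := by rw [hE', card_erase_of_mem he]; omega
    have hE'E : E' ⊆ E := erase_subset e E
    have hins : ∀ A : Finset V, A ⊆ E' → insert e A ⊆ E := fun A hA =>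
      insert_subset he (hA.trans hE'E)
    have hnotmem : ∀ A : Finset V, A ⊆ E' → e ∉ A := fun A hA h =>
      (Finset.notMem_erase e E) (hA h)
    have hpow : (E'.powerset).Nonempty := ⟨∅, empty_mem_powerset E'⟩
    set xe : ℝ := (E'.powerset).sup' hpow (fun A => p (insert e A) - b A) with hxe
    have F1 : ∀ A, A ⊆ E' → p (insert e A) - b A ≤ xe := by
      intro A hA
      rw [hxe]
      exact le_sup' (fun A => p (insert e A) - b A) (mem_powerset.mpr hA)
    have cross : ∀ A A' : Finset V, A ⊆ E' → A' ⊆ E' →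
        p (insert e A') - b A' ≤ b (insert e A) - p A := by
      intro A A' hA hA'
      have h1 := hp (insert e A') A (hins A' hA') (hA.trans hE'E)
      rw [Finset.insert_union, insert_inter_left (hnotmem A hA)] at h1
      have h2 := hb (insert e A) A' (hins A hA) (hA'.trans hE'E)
      rw [Finset.insert_union, insert_inter_left (hnotmem A' hA')] at h2
      have h3 : p (insert e (A' ∪ A)) ≤ b (insert e (A' ∪ A)) :=
        hpb _ (insert_subset he ((union_subset hA' hA).trans hE'E))
      have h4 : p (A' ∩ A) ≤ b (A' ∩ A) :=
        hpb _ ((inter_subset_left).trans (hA'.trans hE'E))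
      rw [union_comm A' A] at h1 h3
      rw [inter_comm A' A] at h1 h4
      linarith
    have F2 : ∀ A, A ⊆ E' → xe ≤ b (insert e A) - p A := by
      intro A hA
      rw [hxe]
      apply Finset.sup'_le
      intro A' hA'
      exact cross A A' hA (mem_powerset.mp hA')
    set p' : Finset V → ℝ := fun A => max (p A) (p (insert e A) - xe) with hp'def
    set b' : Finset V → ℝ := fun A => min (b A) (b (insert e A) - xe) with hb'def
    have hp'max : ∀ A, p' A = max (p A) (p (insert e A) - xe) := fun A => rfl
    have hb'min : ∀ A, b' A = min (b A) (b (insert e A) - xe) := fun A => rfl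
    have hp' : ∀ A B, A ⊆ E' → B ⊆ E' → p' A + p' B ≤ p' (A ∪ B) + p' (A ∩ B) := by
      intro A B hA hB
      have m1 : p (A ∪ B) ≤ p' (A ∪ B) := le_max_left _ _
      have m2 : p (A ∩ B) ≤ p' (A ∩ B) := le_max_left _ _
      have m3 : p (insert e (A ∪ B)) - xe ≤ p' (A ∪ B) := le_max_right _ _
      have m4 : p (insert e (A ∩ B)) - xe ≤ p' (A ∩ B) := le_max_right _ _
      rcases le_total (p (insert e A) - xe) (p A) with h1 | h1 <;>
        rcases le_total (p (insert e B) - xe) (p B) with h2 | h2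
      · rw [hp'max A, max_eq_left h1, hp'max B, max_eq_left h2]
        have := hp A B (hA.trans hE'E) (hB.trans hE'E)
        linarith
      · rw [hp'max A, max_eq_left h1, hp'max B, max_eq_right h2]
        have := hp A (insert e B) (hA.trans hE'E) (hins B hB)
        rw [Finset.union_insert, inter_insert_right (hnotmem A hA)] at this
        linarith
      · rw [hp'max A, max_eq_right h1, hp'max B, max_eq_left h2]
        have := hp (insert e A) B (hins A hA) (hB.trans hE'E)
        rw [Finset.insert_union, insert_inter_left (hnotmem B hB)] at this
        linarith
      · rw [hp'max A, max_eq_right h1, hp'max B, max_eq_right h2]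
        have := hp (insert e A) (insert e B) (hins A hA) (hins B hB)
        rw [insert_union_both, insert_inter_both] at this
        linarith
    have hb' : ∀ A B, A ⊆ E' → B ⊆ E' → b' (A ∪ B) + b' (A ∩ B) ≤ b' A + b' B := by
      intro A B hA hB
      have m1 : b' (A ∪ B) ≤ b (A ∪ B) := min_le_left _ _
      have m2 : b' (A ∩ B) ≤ b (A ∩ B) := min_le_left _ _
      have m3 : b' (A ∪ B) ≤ b (insert e (A ∪ B)) - xe := min_le_right _ _
      have m4 : b' (A ∩ B) ≤ b (insert e (A ∩ B)) - xe := min_le_right _ _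
      rcases le_total (b A) (b (insert e A) - xe) with h1 | h1 <;>
        rcases le_total (b B) (b (insert e B) - xe) with h2 | h2
      · rw [hb'min A, min_eq_left h1, hb'min B, min_eq_left h2]
        have := hb A B (hA.trans hE'E) (hB.trans hE'E)
        linarith
      · rw [hb'min A, min_eq_left h1, hb'min B, min_eq_right h2]
        have := hb A (insert e B) (hA.trans hE'E) (hins B hB)
        rw [Finset.union_insert, inter_insert_right (hnotmem A hA)] at this
        linarith
      · rw [hb'min A, min_eq_right h1, hb'min B, min_eq_left h2]
        have := hb (insert e A) B (hins A hA) (hB.trans hE'E)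
        rw [Finset.insert_union, insert_inter_left (hnotmem B hB)] at this
        linarith
      · rw [hb'min A, min_eq_right h1, hb'min B, min_eq_right h2]
        have := hb (insert e A) (insert e B) (hins A hA) (hins B hB)
        rw [insert_union_both, insert_inter_both] at this
        linarith
    have hp'b' : ∀ A, A ⊆ E' → p' A ≤ b' A := by
      intro A hA
      apply max_le
      · apply le_min (hpb A (hA.trans hE'E))
        have := F2 A hA
        linarith
      · apply le_min
        · have := F1 A hA
          linarith
        · have := hpb (insert e A) (hins A hA)
          linarith
    have hp'0 : p' ∅ = 0 := by
      rw [hp'max, insert_empty_eq, hp0]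
      have := F1 ∅ (empty_subset E')
      rw [insert_empty_eq, hb0] at this
      rw [max_eq_left]
      linarith
    have hb'0 : b' ∅ = 0 := by
      rw [hb'min, insert_empty_eq, hb0]
      have := F2 ∅ (empty_subset E')
      rw [insert_empty_eq, hp0] at this
      rw [min_eq_left]
      linarith
    obtain ⟨x', hx'⟩ := ih E' p' b' hE'card hp' hb' hp'b' hp'0 hb'0
    refine ⟨fun v => if v = e then xe else x' v, ?_⟩
    intro A hA
    by_cases heA : e ∈ A
    · set A' := A.erase e with hA'def
      have hA'sub : A' ⊆ E' := erase_subset_erase e hA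
      have heA' : e ∉ A' := Finset.notMem_erase e A
      have hAeq : A = insert e A' := (insert_erase heA).symm
      have hsum : ∑ a ∈ A, (if a = e then xe else x' a) = xe + ∑ a ∈ A', x' a := by
        rw [hAeq, sum_insert heA', if_pos rfl]
        congr 1
        apply sum_congr rfl
        intro v hv
        rw [if_neg (show v ≠ e from fun h => heA' (h ▸ hv))]
      obtain ⟨hl, hr⟩ := hx' A' hA'sub
      constructor
      · rw [hsum, hAeq]
        have : p (insert e A') - xe ≤ p' A' := le_max_right _ _
        linarith
      · rw [hsum, hAeq]
        have : b' A' ≤ b (insert e A') - xe := min_le_right _ _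
        linarith
    · have hAE' : A ⊆ E' := Finset.subset_erase.mpr ⟨hA, heA⟩
      have hsum : ∑ a ∈ A, (if a = e then xe else x' a) = ∑ a ∈ A, x' a := by
        apply sum_congr rfl
        intro v hv
        rw [if_neg (show v ≠ e from fun h => heA (h ▸ hv))]
      obtain ⟨hl, hr⟩ := hx' A hAE'
      have h1 : p A ≤ p' A := le_max_left _ _
      have h2 : b' A ≤ b A := min_le_left _ _
      rw [hsum]
      exact ⟨h1.trans hl, hr.trans h2⟩

lemma singleton_sdiff_of_not_mem {D : V} {Ω : Finset V} (h : D ∉ Ω) :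
    ({D} : Finset V) \ Ω = {D} := by
  ext x
  simp only [mem_sdiff, mem_singleton]
  constructor
  · rintro ⟨rfl, _⟩; rfl
  · rintro rfl; exact ⟨rfl, h⟩

lemma sdiff_union_eq (s A B : Finset V) : s \ (A ∪ B) = (s \ A) ∩ (s \ B) := by
  ext x; simp only [mem_sdiff, mem_union, mem_inter]; tauto

lemma sdiff_inter_eq (s A B : Finset V) : s \ (A ∩ B) = (s \ A) ∪ (s \ B) := by
  ext x; simp only [mem_sdiff, mem_union, mem_inter]; tauto

lemma sdiff_inter_self_eq (s A : Finset V) : s \ (A ∩ s) = s \ A := by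
  ext x; simp only [mem_sdiff, mem_inter]; tauto

lemma cut_finite (O : ℕ → Finset V) (S D : V) (ρ : ℕ → Finset V → Finset V → ℝ) (L : ℕ) :
    {c : ℝ | ∃ Ωs : Finset V, S ∈ Ωs ∧ D ∉ Ωs ∧
      c = ∑ l ∈ Finset.Ico 1 L, ρ l (Ωs ∩ O l) (O (l + 1) \ Ωs)}.Finite := by
  apply Set.Finite.subset (Set.finite_range
    (fun Ωs : Finset V => ∑ l ∈ Finset.Ico 1 L, ρ l (Ωs ∩ O l) (O (l + 1) \ Ωs)))
  rintro c ⟨Ω, _, _, rfl⟩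
  exact ⟨Ω, rfl⟩

lemma cut_nonempty {O : ℕ → Finset V} {S D : V} (ρ : ℕ → Finset V → Finset V → ℝ) {L : ℕ}
    (hSD : S ≠ D) :
    {c : ℝ | ∃ Ωs : Finset V, S ∈ Ωs ∧ D ∉ Ωs ∧
      c = ∑ l ∈ Finset.Ico 1 L, ρ l (Ωs ∩ O l) (O (l + 1) \ Ωs)}.Nonempty :=
  ⟨_, {S}, mem_singleton_self S, by simp [Ne.symm hSD], rfl⟩

lemma flow_exists (L : ℕ) (hL : 2 ≤ L) :
    ∀ (O : ℕ → Finset V) (S D : V) (ρ : ℕ → Finset V → Finset V → ℝ),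
    (∀ i j, i ≠ j → Disjoint (O i) (O j)) →
    O 1 = {S} → O L = {D} →
    (∀ l U W, 0 ≤ ρ l U W) →
    (∀ l, ∀ U₁ U₂ W₁ W₂ : Finset V, U₁ ⊆ O l → U₂ ⊆ O l → W₁ ⊆ O (l + 1) → W₂ ⊆ O (l + 1) →
      ρ l (U₁ ∪ U₂) (W₁ ∩ W₂) + ρ l (U₁ ∩ U₂) (W₁ ∪ W₂) ≤ ρ l U₁ W₁ + ρ l U₂ W₂) →
    (∀ l, ∀ U U₁ W W₁ : Finset V, U ⊆ U₁ → W ⊆ W₁ → U₁ ⊆ O l → W₁ ⊆ O (l + 1) →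
      ρ l U W ≤ ρ l U₁ W₁) →
    (∀ l, ∀ U W : Finset V, U = ∅ ∨ W = ∅ → ρ l U W = 0) →
    ∃ f : V → ℝ, (∀ v, 0 ≤ f v) ∧ f S = f D ∧
      (∀ l, 1 ≤ l → l ≤ L - 1 → ∀ U ⊆ O l, ∀ W ⊆ O (l + 1),
        ∑ w ∈ W, f w - ∑ v ∈ O l \ U, f v ≤ ρ l U W) ∧
      f S = sInf {c : ℝ | ∃ Ωs : Finset V, S ∈ Ωs ∧ D ∉ Ωs ∧
        c = ∑ l ∈ Finset.Ico 1 L, ρ l (Ωs ∩ O l) (O (l + 1) \ Ωs)} := by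
  induction L, hL using Nat.le_induction with
  | base =>
    intro O S D ρ hdisj hS hD hρnonneg hbi hmono hempty
    have hSD : S ≠ D := by
      intro h
      have hd := hdisj 1 2 (by omega)
      rw [hS, hD, ← h] at hd
      exact (Finset.disjoint_singleton.mp hd) rfl
    set v := ρ 1 {S} {D} with hv
    have hsetC : {c : ℝ | ∃ Ωs : Finset V, S ∈ Ωs ∧ D ∉ Ωs ∧
        c = ∑ l ∈ Finset.Ico 1 2, ρ l (Ωs ∩ O l) (O (l + 1) \ Ωs)} = {v} := by
      ext c
      simp only [Set.mem_setOf_eq, Set.mem_singleton_iff]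
      constructor
      · rintro ⟨Ω, hSΩ, hDΩ, rfl⟩
        have hsd : {D} \ Ω = {D} := by
          ext x
          simp only [mem_sdiff, mem_singleton]
          constructor
          · rintro ⟨rfl, _⟩; rfl
          · rintro rfl; exact ⟨rfl, hDΩ⟩
        rw [show Finset.Ico 1 2 = {1} from rfl, sum_singleton, hS, hD,
          Finset.inter_singleton_of_mem hSΩ, hsd]
      · rintro rfl
        refine ⟨{S}, mem_singleton_self S, by simp [Ne.symm hSD], ?_⟩
        have hsd : {D} \ ({S} : Finset V) = {D} := by
          ext x
          simp only [mem_sdiff, mem_singleton]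
          constructor
          · rintro ⟨rfl, _⟩; rfl
          · rintro rfl; exact ⟨rfl, fun h => hSD h.symm⟩
        rw [show Finset.Ico 1 2 = {1} from rfl, sum_singleton, hS, hD,
          Finset.inter_singleton_of_mem (mem_singleton_self S), hsd]
    refine ⟨fun w => if w = S ∨ w = D then v else 0, ?_, ?_, ?_, ?_⟩
    · intro w
      dsimp only
      split
      · exact hρnonneg 1 {S} {D}
      · exact le_refl 0
    · simp
    · intro l h1 h2 U hU W hW
      have hl : l = 1 := by omega
      subst hl
      rw [hS] at hU
      rw [show (1 : ℕ) + 1 = 2 from rfl, hD] at hW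
      have hfS : (if S = S ∨ S = D then v else 0) = v := by simp
      have hfD : (if D = S ∨ D = D then v else 0) = v := by simp
      have hvnn : 0 ≤ v := hρnonneg 1 {S} {D}
      rcases Finset.subset_singleton_iff.mp hU with rfl | rfl
      · rcases Finset.subset_singleton_iff.mp hW with rfl | rfl
        · rw [sum_empty, sdiff_empty, hS, sum_singleton, hfS]
          have := hρnonneg 1 (∅ : Finset V) (∅ : Finset V)
          linarith
        · rw [sdiff_empty, hS, sum_singleton, sum_singleton, hfS, hfD]
          have := hρnonneg 1 (∅ : Finset V) ({D} : Finset V)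
          linarith
      · rcases Finset.subset_singleton_iff.mp hW with rfl | rfl
        · rw [sum_empty, hS, sdiff_self, Finset.bot_eq_empty, sum_empty]
          have := hρnonneg 1 ({S} : Finset V) (∅ : Finset V)
          linarith
        · rw [hS, sdiff_self, Finset.bot_eq_empty, sum_empty, sum_singleton, hfD, hv]
          linarith
    · rw [hsetC, csInf_singleton]
      simp
  | succ n hn ih =>
    intro O S D ρ hdisj hS hD hρnonneg hbi hmono hempty
    have hn1 : n - 1 + 1 = n := by omega
    have hSD : S ≠ D := by
      intro h
      have hd := hdisj 1 (n + 1) (by omega)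
      rw [hS, hD, ← h] at hd
      exact (Finset.disjoint_singleton.mp hd) rfl
    -- specialized versions of hypotheses at layer n-1
    have hbiN : ∀ U₁ U₂ W₁ W₂ : Finset V, U₁ ⊆ O (n-1) → U₂ ⊆ O (n-1) →
        W₁ ⊆ O n → W₂ ⊆ O n →
        ρ (n-1) (U₁ ∪ U₂) (W₁ ∩ W₂) + ρ (n-1) (U₁ ∩ U₂) (W₁ ∪ W₂) ≤
          ρ (n-1) U₁ W₁ + ρ (n-1) U₂ W₂ := by
      have := hbi (n-1)
      rwa [hn1] at this
    have hmonoN : ∀ U U₁ W W₁ : Finset V, U ⊆ U₁ → W ⊆ W₁ → U₁ ⊆ O (n-1) → W₁ ⊆ O n →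
        ρ (n-1) U W ≤ ρ (n-1) U₁ W₁ := by
      have := hmono (n-1)
      rwa [hn1] at this
    have hDOn1 : ({D} : Finset V) ⊆ O (n + 1) := by rw [hD]
    -- merged capacity
    have hpowOn : ((O n).powerset).Nonempty := ⟨∅, empty_mem_powerset _⟩
    set mrg : Finset V → ℝ := fun U =>
      ((O n).powerset).inf' hpowOn (fun T => ρ (n-1) U (O n \ T) + ρ n T {D}) with hmrg
    have hmrg_le : ∀ U T, T ⊆ O n →
        mrg U ≤ ρ (n-1) U (O n \ T) + ρ n T {D} := by
      intro U T hT
      simp only [hmrg]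
      exact inf'_le _ (mem_powerset.mpr hT)
    have hmrg_nonneg : ∀ U, 0 ≤ mrg U := by
      intro U
      simp only [hmrg]
      exact le_inf' _ _ (fun T _ => add_nonneg (hρnonneg _ _ _) (hρnonneg _ _ _))
    have hmrg_empty : mrg ∅ = 0 := by
      apply le_antisymm _ (hmrg_nonneg ∅)
      have := hmrg_le ∅ ∅ (empty_subset _)
      rw [hempty (n-1) ∅ (O n \ ∅) (Or.inl rfl), hempty n ∅ {D} (Or.inl rfl)] at this
      linarith
    have hmrg_mono : ∀ U U', U ⊆ U' → U' ⊆ O (n-1) → mrg U ≤ mrg U' := by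
      intro U U' hUU' hU'
      simp only [hmrg]
      apply le_inf'
      intro T hT
      have h1 : mrg U ≤ ρ (n-1) U (O n \ T) + ρ n T {D} :=
        hmrg_le U T (mem_powerset.mp hT)
      simp only [hmrg] at h1
      refine h1.trans (add_le_add_left ?_ _)
      exact hmonoN U U' (O n \ T) (O n \ T) hUU' (Finset.Subset.refl _) hU' sdiff_subset
    -- contracted network
    set O' : ℕ → Finset V := fun l => if l < n then O l else if l = n then O (n+1) else ∅
      with hO'
    set ρ' : ℕ → Finset V → Finset V → ℝ := fun l U W =>
      if l + 1 < n then ρ l U W else if l = n - 1 ∧ W ≠ ∅ then mrg U else 0 with hρ'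
    have hO'lt : ∀ l, l < n → O' l = O l := by
      intro l hl; simp only [hO']; rw [if_pos hl]
    have hO'n : O' n = O (n+1) := by
      simp only [hO']
      rw [if_neg (lt_irrefl n)]
      simp
    have hO'big : ∀ l, n < l → O' l = ∅ := by
      intro l hl; simp only [hO']
      rw [if_neg (by omega), if_neg (by omega)]
    have hρ'lt : ∀ l U W, l + 1 < n → ρ' l U W = ρ l U W := by
      intro l U W hl; simp only [hρ']; rw [if_pos hl]
    have hρ'mrg : ∀ U W, W ≠ ∅ → ρ' (n-1) U W = mrg U := by
      intro U W hW; simp only [hρ']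
      split_ifs with h1 h2
      · exact absurd h1 (by omega)
      · rfl
      · tauto
    have hρ'emptyW : ∀ l U, ρ' l U ∅ = 0 := by
      intro l U; simp only [hρ']
      by_cases h : l + 1 < n
      · rw [if_pos h, hempty l U ∅ (Or.inr rfl)]
      · rw [if_neg h, if_neg (by tauto)]
    have hρ'big : ∀ l U W, n ≤ l → ρ' l U W = 0 := by
      intro l U W hl; simp only [hρ']
      rw [if_neg (by omega), if_neg (by rintro ⟨h, _⟩; omega)]
    -- properties of the contracted network
    have hdisj' : ∀ i j, i ≠ j → Disjoint (O' i) (O' j) := by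
      have hclass : ∀ k, (k < n ∧ O' k = O k) ∨ (k = n ∧ O' k = O (n+1)) ∨ O' k = ∅ := by
        intro k
        rcases lt_trichotomy k n with h | h | h
        · exact Or.inl ⟨h, hO'lt k h⟩
        · exact Or.inr (Or.inl ⟨h, h ▸ hO'n⟩)
        · exact Or.inr (Or.inr (hO'big k h))
      intro i j hij
      rcases hclass i with ⟨hi, ei⟩ | ⟨hi, ei⟩ | ei <;>
        rcases hclass j with ⟨hj, ej⟩ | ⟨hj, ej⟩ | ej <;>
        rw [ei, ej] <;>
        first
          | exact hdisj _ _ hij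
          | exact hdisj _ _ (by omega)
          | simp
    have hS' : O' 1 = {S} := by rw [hO'lt 1 (by omega), hS]
    have hD' : O' n = {D} := by rw [hO'n, hD]
    have hρ'nonneg : ∀ l U W, 0 ≤ ρ' l U W := by
      intro l U W
      simp only [hρ']
      split_ifs
      · exact hρnonneg l U W
      · exact hmrg_nonneg U
      · exact le_refl 0
    have hbi' : ∀ l, ∀ U₁ U₂ W₁ W₂ : Finset V, U₁ ⊆ O' l → U₂ ⊆ O' l →
        W₁ ⊆ O' (l + 1) → W₂ ⊆ O' (l + 1) →
        ρ' l (U₁ ∪ U₂) (W₁ ∩ W₂) + ρ' l (U₁ ∩ U₂) (W₁ ∪ W₂) ≤ ρ' l U₁ W₁ + ρ' l U₂ W₂ := by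
      intro l U₁ U₂ W₁ W₂ hU₁ hU₂ hW₁ hW₂
      by_cases h1 : l + 1 < n
      · rw [hρ'lt _ _ _ h1, hρ'lt _ _ _ h1, hρ'lt _ _ _ h1, hρ'lt _ _ _ h1]
        rw [hO'lt l (by omega)] at hU₁ hU₂
        rw [hO'lt (l+1) h1] at hW₁ hW₂
        exact hbi l U₁ U₂ W₁ W₂ hU₁ hU₂ hW₁ hW₂
      · by_cases h2 : l = n - 1
        · subst h2
          rw [hn1, hD'] at hW₁ hW₂
          rw [hO'lt (n-1) (by omega)] at hU₁ hU₂
          rcases Finset.subset_singleton_iff.mp hW₁ with rfl | rfl <;>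
            rcases Finset.subset_singleton_iff.mp hW₂ with rfl | rfl
          · rw [Finset.empty_inter, Finset.empty_union]
            simp only [hρ'emptyW]
            simp
          · rw [Finset.empty_inter, Finset.empty_union, hρ'emptyW, hρ'emptyW,
              hρ'mrg _ {D} (singleton_ne_empty D), hρ'mrg _ {D} (singleton_ne_empty D)]
            have := hmrg_mono (U₁ ∩ U₂) U₂ inter_subset_right hU₂
            have := hmrg_nonneg U₁
            linarith
          · rw [Finset.inter_empty, Finset.union_empty, hρ'emptyW, hρ'emptyW,
              hρ'mrg _ {D} (singleton_ne_empty D), hρ'mrg _ {D} (singleton_ne_empty D)]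
            have := hmrg_mono (U₁ ∩ U₂) U₁ inter_subset_left hU₁
            have := hmrg_nonneg U₂
            linarith
          · rw [Finset.inter_self, Finset.union_self,
              hρ'mrg _ {D} (singleton_ne_empty D), hρ'mrg _ {D} (singleton_ne_empty D),
              hρ'mrg _ {D} (singleton_ne_empty D), hρ'mrg _ {D} (singleton_ne_empty D)]
            obtain ⟨T₁, hT₁mem, hT₁min⟩ := Finset.exists_min_image ((O n).powerset)
              (fun T => ρ (n-1) U₁ (O n \ T) + ρ n T {D}) hpowOn
            obtain ⟨T₂, hT₂mem, hT₂min⟩ := Finset.exists_min_image ((O n).powerset)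
              (fun T => ρ (n-1) U₂ (O n \ T) + ρ n T {D}) hpowOn
            have hT₁ : T₁ ⊆ O n := mem_powerset.mp hT₁mem
            have hT₂ : T₂ ⊆ O n := mem_powerset.mp hT₂mem
            have e₁ : mrg U₁ = ρ (n-1) U₁ (O n \ T₁) + ρ n T₁ {D} :=
              le_antisymm (hmrg_le U₁ T₁ hT₁) (by simp only [hmrg]; exact le_inf' _ _ hT₁min)
            have e₂ : mrg U₂ = ρ (n-1) U₂ (O n \ T₂) + ρ n T₂ {D} :=
              le_antisymm (hmrg_le U₂ T₂ hT₂) (by simp only [hmrg]; exact le_inf' _ _ hT₂min)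
            have b₁ : mrg (U₁ ∪ U₂) ≤ ρ (n-1) (U₁ ∪ U₂) (O n \ (T₁ ∪ T₂)) +
                ρ n (T₁ ∪ T₂) {D} := hmrg_le _ _ (union_subset hT₁ hT₂)
            have b₂ : mrg (U₁ ∩ U₂) ≤ ρ (n-1) (U₁ ∩ U₂) (O n \ (T₁ ∩ T₂)) +
                ρ n (T₁ ∩ T₂) {D} := hmrg_le _ _ (inter_subset_left.trans hT₁)
            have key1 := hbiN U₁ U₂ (O n \ T₁) (O n \ T₂) hU₁ hU₂ sdiff_subset sdiff_subset
            rw [← sdiff_union_eq, ← sdiff_inter_eq] at key1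
            have key2 := hbi n T₁ T₂ {D} {D} hT₁ hT₂ hDOn1 hDOn1
            rw [Finset.inter_self, Finset.union_self] at key2
            linarith
        · have hl : n ≤ l := by omega
          rw [hρ'big _ _ _ hl, hρ'big _ _ _ hl, hρ'big _ _ _ hl, hρ'big _ _ _ hl]
    have hmono' : ∀ l, ∀ U U₁ W W₁ : Finset V, U ⊆ U₁ → W ⊆ W₁ → U₁ ⊆ O' l →
        W₁ ⊆ O' (l + 1) → ρ' l U W ≤ ρ' l U₁ W₁ := by
      intro l U U₁ W W₁ hUU₁ hWW₁ hU₁ hW₁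
      by_cases h1 : l + 1 < n
      · rw [hρ'lt _ _ _ h1, hρ'lt _ _ _ h1]
        rw [hO'lt l (by omega)] at hU₁
        rw [hO'lt (l+1) h1] at hW₁
        exact hmono l U U₁ W W₁ hUU₁ hWW₁ hU₁ hW₁
      · by_cases h2 : l = n - 1
        · subst h2
          rw [hn1, hD'] at hW₁
          rw [hO'lt (n-1) (by omega)] at hU₁
          rcases Finset.subset_singleton_iff.mp hW₁ with rfl | rfl
          · rw [Finset.subset_empty.mp hWW₁, hρ'emptyW, hρ'emptyW]
          · rcases Finset.subset_singleton_iff.mp hWW₁ with rfl | rfl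
            · rw [hρ'emptyW, hρ'mrg _ {D} (singleton_ne_empty D)]
              exact hmrg_nonneg U₁
            · rw [hρ'mrg _ {D} (singleton_ne_empty D), hρ'mrg _ {D} (singleton_ne_empty D)]
              exact hmrg_mono U U₁ hUU₁ hU₁
        · have hl : n ≤ l := by omega
          rw [hρ'big _ _ _ hl, hρ'big _ _ _ hl]
    have hempty' : ∀ l, ∀ U W : Finset V, U = ∅ ∨ W = ∅ → ρ' l U W = 0 := by
      intro l U W h
      rcases h with rfl | rfl
      · by_cases h1 : l + 1 < n
        · rw [hρ'lt _ _ _ h1]; exact hempty l ∅ W (Or.inl rfl)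
        · by_cases h2 : l = n - 1
          · subst h2
            by_cases hW : W = ∅
            · subst hW; exact hρ'emptyW _ _
            · rw [hρ'mrg _ W hW, hmrg_empty]
          · exact hρ'big _ _ _ (by omega)
      · exact hρ'emptyW l U
    obtain ⟨f', hf'nn, hf'SD, hf'con, hf'val⟩ :=
      ih O' S D ρ' hdisj' hS' hD' hρ'nonneg hbi' hmono' hempty'
    -- sum splitting helpers
    have hsplitO : ∀ (F : ℕ → ℝ), ∑ l ∈ Finset.Ico 1 (n+1), F l =
        (∑ l ∈ Finset.Ico 1 (n-1), F l) + F (n-1) + F n := by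
      intro F
      rw [Finset.sum_Ico_succ_top (by omega : 1 ≤ n) F]
      have h2 := Finset.sum_Ico_succ_top (by omega : 1 ≤ n - 1) F
      rw [hn1] at h2
      rw [h2]
    have hsplitC : ∀ (F : ℕ → ℝ), ∑ l ∈ Finset.Ico 1 n, F l =
        (∑ l ∈ Finset.Ico 1 (n-1), F l) + F (n-1) := by
      intro F
      have h2 := Finset.sum_Ico_succ_top (by omega : 1 ≤ n - 1) F
      rwa [hn1] at h2
    have claim1 : ∀ Ωs : Finset V, S ∈ Ωs → D ∉ Ωs →
        ∑ l ∈ Finset.Ico 1 n, ρ' l (Ωs ∩ O' l) (O' (l+1) \ Ωs) ≤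
        ∑ l ∈ Finset.Ico 1 (n+1), ρ l (Ωs ∩ O l) (O (l+1) \ Ωs) := by
      intro Ωs hSΩ hDΩ
      rw [hsplitC, hsplitO]
      have hpre : ∑ l ∈ Finset.Ico 1 (n-1), ρ' l (Ωs ∩ O' l) (O' (l+1) \ Ωs) =
          ∑ l ∈ Finset.Ico 1 (n-1), ρ l (Ωs ∩ O l) (O (l+1) \ Ωs) := by
        apply Finset.sum_congr rfl
        intro l hl
        rw [Finset.mem_Ico] at hl
        have h1 : l + 1 < n := by omega
        rw [hρ'lt _ _ _ h1, hO'lt l (by omega), hO'lt (l+1) h1]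
      have hmer : ρ' (n-1) (Ωs ∩ O' (n-1)) (O' (n-1+1) \ Ωs) ≤
          ρ (n-1) (Ωs ∩ O (n-1)) (O (n-1+1) \ Ωs) + ρ n (Ωs ∩ O n) (O (n+1) \ Ωs) := by
        rw [hn1, hO'lt (n-1) (by omega), hD', singleton_sdiff_of_not_mem hDΩ,
          hρ'mrg _ _ (singleton_ne_empty D), hD, singleton_sdiff_of_not_mem hDΩ]
        have h3 := hmrg_le (Ωs ∩ O (n-1)) (Ωs ∩ O n) inter_subset_right
        rwa [sdiff_inter_self_eq] at h3
      linarith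
    have claim2 : ∀ Ω : Finset V, S ∈ Ω → D ∉ Ω → ∃ Ωs : Finset V, S ∈ Ωs ∧ D ∉ Ωs ∧
        ∑ l ∈ Finset.Ico 1 (n+1), ρ l (Ωs ∩ O l) (O (l+1) \ Ωs) ≤
        ∑ l ∈ Finset.Ico 1 n, ρ' l (Ω ∩ O' l) (O' (l+1) \ Ω) := by
      intro Ω hSΩ hDΩ
      obtain ⟨T, hTmem, hTmin⟩ := Finset.exists_min_image ((O n).powerset)
        (fun T => ρ (n-1) (Ω ∩ O (n-1)) (O n \ T) + ρ n T {D}) hpowOn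
      have hT : T ⊆ O n := mem_powerset.mp hTmem
      set Ωs := (Ω \ O n) ∪ T with hΩs
      have hSΩs : S ∈ Ωs := by
        apply mem_union_left
        rw [mem_sdiff]
        refine ⟨hSΩ, fun hSn => ?_⟩
        exact (Finset.disjoint_left.mp (hdisj 1 n (by omega))
          (hS ▸ mem_singleton_self S)) hSn
      have hDΩs : D ∉ Ωs := by
        rw [hΩs, mem_union, mem_sdiff]
        rintro (⟨hD1, _⟩ | hD2)
        · exact hDΩ hD1
        · exact (Finset.disjoint_left.mp (hdisj n (n+1) (by omega)) (hT hD2))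
            (hD ▸ mem_singleton_self D)
      have hmemout : ∀ v, v ∉ O n → (v ∈ Ωs ↔ v ∈ Ω) := by
        intro v hv
        rw [hΩs, mem_union, mem_sdiff]
        constructor
        · rintro (⟨h, _⟩ | h)
          · exact h
          · exact absurd (hT h) hv
        · intro h; exact Or.inl ⟨h, hv⟩
      have hseteq : ∀ k, k ≠ n → Ωs ∩ O k = Ω ∩ O k := by
        intro k hk
        ext v
        simp only [mem_inter]
        constructor
        · rintro ⟨h1, h2⟩
          exact ⟨(hmemout v (fun hvn =>
            (Finset.disjoint_left.mp (hdisj k n hk) h2) hvn)).mp h1, h2⟩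
        · rintro ⟨h1, h2⟩
          exact ⟨(hmemout v (fun hvn =>
            (Finset.disjoint_left.mp (hdisj k n hk) h2) hvn)).mpr h1, h2⟩
      have hsdeq : ∀ k, k ≠ n → O k \ Ωs = O k \ Ω := by
        intro k hk
        ext v
        simp only [mem_sdiff]
        constructor
        · rintro ⟨h1, h2⟩
          exact ⟨h1, fun hv => h2 ((hmemout v (fun hvn =>
            (Finset.disjoint_left.mp (hdisj k n hk) h1) hvn)).mpr hv)⟩
        · rintro ⟨h1, h2⟩
          exact ⟨h1, fun hv => h2 ((hmemout v (fun hvn =>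
            (Finset.disjoint_left.mp (hdisj k n hk) h1) hvn)).mp hv)⟩
      have hΩsOn : Ωs ∩ O n = T := by
        ext v
        simp only [hΩs, mem_inter, mem_union, mem_sdiff]
        constructor
        · rintro ⟨(⟨_, hvn⟩ | h), h2⟩
          · exact absurd h2 hvn
          · exact h
        · intro h; exact ⟨Or.inr h, hT h⟩
      have hOnΩs : O n \ Ωs = O n \ T := by
        ext v
        simp only [hΩs, mem_sdiff, mem_union]
        constructor
        · rintro ⟨h1, h2⟩
          exact ⟨h1, fun ht => h2 (Or.inr ht)⟩
        · rintro ⟨h1, h2⟩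
          refine ⟨h1, ?_⟩
          rintro (h3 | ht)
          · exact h3.2 h1
          · exact h2 ht
      refine ⟨Ωs, hSΩs, hDΩs, ?_⟩
      rw [hsplitO, hsplitC]
      have hpre : ∑ l ∈ Finset.Ico 1 (n-1), ρ l (Ωs ∩ O l) (O (l+1) \ Ωs) =
          ∑ l ∈ Finset.Ico 1 (n-1), ρ' l (Ω ∩ O' l) (O' (l+1) \ Ω) := by
        apply Finset.sum_congr rfl
        intro l hl
        rw [Finset.mem_Ico] at hl
        have h1 : l + 1 < n := by omega
        rw [hρ'lt _ _ _ h1, hO'lt l (by omega), hO'lt (l+1) h1,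
          hseteq l (by omega), hsdeq (l+1) (by omega)]
      have hmer : ρ (n-1) (Ωs ∩ O (n-1)) (O (n-1+1) \ Ωs) + ρ n (Ωs ∩ O n) (O (n+1) \ Ωs) =
          ρ' (n-1) (Ω ∩ O' (n-1)) (O' (n-1+1) \ Ω) := by
        rw [hn1, hO'lt (n-1) (by omega), hD', singleton_sdiff_of_not_mem hDΩ,
          hρ'mrg _ _ (singleton_ne_empty D), hOnΩs, hseteq (n-1) (by omega), hΩsOn,
          hD, singleton_sdiff_of_not_mem hDΩs]
        exact (le_antisymm (hmrg_le _ T hT)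
          (by simp only [hmrg]; exact le_inf' _ _ hTmin)).symm
      linarith
    -- equality of the two min cuts
    have hfinC := cut_finite O S D ρ (n+1)
    have hneC : {c : ℝ | ∃ Ωs : Finset V, S ∈ Ωs ∧ D ∉ Ωs ∧
        c = ∑ l ∈ Finset.Ico 1 (n+1), ρ l (Ωs ∩ O l) (O (l + 1) \ Ωs)}.Nonempty :=
      cut_nonempty ρ hSD
    have hfinC' := cut_finite O' S D ρ' n
    have hneC' : {c : ℝ | ∃ Ωs : Finset V, S ∈ Ωs ∧ D ∉ Ωs ∧
        c = ∑ l ∈ Finset.Ico 1 n, ρ' l (Ωs ∩ O' l) (O' (l + 1) \ Ωs)}.Nonempty :=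
      cut_nonempty ρ' hSD
    have hcutEq : sInf {c : ℝ | ∃ Ωs : Finset V, S ∈ Ωs ∧ D ∉ Ωs ∧
        c = ∑ l ∈ Finset.Ico 1 n, ρ' l (Ωs ∩ O' l) (O' (l + 1) \ Ωs)} =
        sInf {c : ℝ | ∃ Ωs : Finset V, S ∈ Ωs ∧ D ∉ Ωs ∧
        c = ∑ l ∈ Finset.Ico 1 (n+1), ρ l (Ωs ∩ O l) (O (l + 1) \ Ωs)} := by
      apply le_antisymm
      · obtain ⟨Ω, hSΩ, hDΩ, hval⟩ := hneC.csInf_mem hfinC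
        rw [hval]
        exact le_trans (csInf_le hfinC'.bddBelow ⟨Ω, hSΩ, hDΩ, rfl⟩) (claim1 Ω hSΩ hDΩ)
      · obtain ⟨Ω, hSΩ, hDΩ, hval⟩ := hneC'.csInf_mem hfinC'
        obtain ⟨Ωs, hS2, hD2, hle⟩ := claim2 Ω hSΩ hDΩ
        rw [hval]
        exact le_trans (csInf_le hfinC.bddBelow ⟨Ωs, hS2, hD2, rfl⟩) hle
    -- bounds for the last-layer flow
    have hpow1 : ((O (n-1)).powerset).Nonempty := ⟨∅, empty_mem_powerset _⟩
    set b : Finset V → ℝ := fun W =>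
      ((O (n-1)).powerset).inf' hpow1 (fun U => ρ (n-1) U W + ∑ v ∈ O (n-1) \ U, f' v)
      with hbdef
    set p : Finset V → ℝ := fun A => f' S - ρ n (O n \ A) {D} with hpdef
    have hble : ∀ W U, U ⊆ O (n-1) →
        b W ≤ ρ (n-1) U W + ∑ v ∈ O (n-1) \ U, f' v := by
      intro W U hU
      simp only [hbdef]
      exact inf'_le _ (mem_powerset.mpr hU)
    have hb_nonneg : ∀ W, 0 ≤ b W := by
      intro W
      simp only [hbdef]
      exact le_inf' _ _ fun U _ =>
        add_nonneg (hρnonneg _ _ _) (Finset.sum_nonneg fun v _ => hf'nn v)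
    have hb0 : b ∅ = 0 := by
      apply le_antisymm _ (hb_nonneg ∅)
      have h5 := hble ∅ (O (n-1)) (Finset.Subset.refl _)
      rw [hempty (n-1) _ ∅ (Or.inr rfl), sdiff_self, Finset.bot_eq_empty, sum_empty] at h5
      linarith
    have hbmono : ∀ A B, A ⊆ B → B ⊆ O n → b A ≤ b B := by
      intro A B hAB hB
      conv_rhs => rw [hbdef]
      apply le_inf'
      intro U hU
      refine le_trans (hble A U (mem_powerset.mp hU)) (add_le_add_left ?_ _)
      exact hmonoN U U A B (Finset.Subset.refl _) hAB (mem_powerset.mp hU) hB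
    have hbsub : ∀ A B, A ⊆ O n → B ⊆ O n → b (A ∪ B) + b (A ∩ B) ≤ b A + b B := by
      intro A B hA hB
      obtain ⟨U₁, hU₁mem, hU₁min⟩ := Finset.exists_min_image ((O (n-1)).powerset)
        (fun U => ρ (n-1) U A + ∑ v ∈ O (n-1) \ U, f' v) hpow1
      obtain ⟨U₂, hU₂mem, hU₂min⟩ := Finset.exists_min_image ((O (n-1)).powerset)
        (fun U => ρ (n-1) U B + ∑ v ∈ O (n-1) \ U, f' v) hpow1
      have hU₁ : U₁ ⊆ O (n-1) := mem_powerset.mp hU₁mem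
      have hU₂ : U₂ ⊆ O (n-1) := mem_powerset.mp hU₂mem
      have e₁ : b A = ρ (n-1) U₁ A + ∑ v ∈ O (n-1) \ U₁, f' v :=
        le_antisymm (hble A U₁ hU₁) (by simp only [hbdef]; exact le_inf' _ _ hU₁min)
      have e₂ : b B = ρ (n-1) U₂ B + ∑ v ∈ O (n-1) \ U₂, f' v :=
        le_antisymm (hble B U₂ hU₂) (by simp only [hbdef]; exact le_inf' _ _ hU₂min)
      have b₁ : b (A ∪ B) ≤ ρ (n-1) (U₁ ∩ U₂) (A ∪ B) + ∑ v ∈ O (n-1) \ (U₁ ∩ U₂), f' v :=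
        hble _ _ (inter_subset_left.trans hU₁)
      have b₂ : b (A ∩ B) ≤ ρ (n-1) (U₁ ∪ U₂) (A ∩ B) + ∑ v ∈ O (n-1) \ (U₁ ∪ U₂), f' v :=
        hble _ _ (union_subset hU₁ hU₂)
      have key := hbiN U₁ U₂ A B hU₁ hU₂ hA hB
      have hs₁ := Finset.sum_sdiff (f := f') hU₁
      have hs₂ := Finset.sum_sdiff (f := f') hU₂
      have hs₃ := Finset.sum_sdiff (f := f')
        (show U₁ ∩ U₂ ⊆ O (n-1) from inter_subset_left.trans hU₁)
      have hs₄ := Finset.sum_sdiff (f := f') (union_subset hU₁ hU₂)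
      have hs₅ := Finset.sum_union_inter (s₁ := U₁) (s₂ := U₂) (f := f')
      linarith
    have hpb : ∀ A, A ⊆ O n → p A ≤ b A := by
      intro A hA
      conv_rhs => rw [hbdef]
      apply le_inf'
      intro U hUmem
      have hU : U ⊆ O (n-1) := mem_powerset.mp hUmem
      have hcon := hf'con (n-1) (by omega) (by omega) U
        (by rw [hO'lt (n-1) (by omega)]; exact hU) {D} (by rw [hn1, hD'])
      rw [sum_singleton, hO'lt (n-1) (by omega),
        hρ'mrg _ _ (singleton_ne_empty D)] at hcon
      have hm := hmrg_le U (O n \ A) sdiff_subset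
      rw [Finset.sdiff_sdiff_eq_self hA] at hm
      have hfd : f' D = f' S := hf'SD.symm
      simp only [hpdef]
      linarith
    have hp0 : p ∅ ≤ 0 := by
      have hcon := hf'con (n-1) (by omega) (by omega) (O (n-1))
        (by rw [hO'lt (n-1) (by omega)]) {D} (by rw [hn1, hD'])
      rw [sum_singleton, hO'lt (n-1) (by omega), sdiff_self, Finset.bot_eq_empty,
        sum_empty, hρ'mrg _ _ (singleton_ne_empty D)] at hcon
      have hm := hmrg_le (O (n-1)) (O n) (Finset.Subset.refl _)
      rw [sdiff_self, Finset.bot_eq_empty, hempty (n-1) _ ∅ (Or.inr rfl)] at hm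
      have hfd : f' D = f' S := hf'SD.symm
      simp only [hpdef]
      rw [sdiff_empty]
      linarith
    have hpsup : ∀ A B, A ⊆ O n → B ⊆ O n → p A + p B ≤ p (A ∪ B) + p (A ∩ B) := by
      intro A B hA hB
      have key := hbi n (O n \ A) (O n \ B) {D} {D} sdiff_subset sdiff_subset hDOn1 hDOn1
      rw [Finset.inter_self, Finset.union_self, ← sdiff_inter_eq, ← sdiff_union_eq] at key
      simp only [hpdef]
      linarith
    set ph : Finset V → ℝ := fun A => if A = ∅ then 0 else p A with hphdef
    have hph0 : ph ∅ = 0 := by simp [hphdef]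
    have hph_ne : ∀ A : Finset V, A ≠ ∅ → ph A = p A := by
      intro A hA; simp [hphdef, hA]
    have hphsup : ∀ A B, A ⊆ O n → B ⊆ O n → ph A + ph B ≤ ph (A ∪ B) + ph (A ∩ B) := by
      intro A B hA hB
      by_cases hAe : A = ∅
      · subst hAe
        rw [hph0, Finset.empty_union, Finset.empty_inter, hph0]
        linarith
      · by_cases hBe : B = ∅
        · subst hBe
          rw [hph0, Finset.union_empty, Finset.inter_empty, hph0]
        · rw [hph_ne A hAe, hph_ne B hBe,
            hph_ne (A ∪ B) (fun h => hAe (Finset.union_eq_empty.mp h).1)]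
          by_cases hABe : A ∩ B = ∅
          · rw [hABe, hph0]
            have h6 := hpsup A B hA hB
            rw [hABe] at h6
            linarith
          · rw [hph_ne (A ∩ B) hABe]
            exact hpsup A B hA hB
    have hphpb : ∀ A, A ⊆ O n → ph A ≤ b A := by
      intro A hA
      by_cases hAe : A = ∅
      · subst hAe; rw [hph0, hb0]
      · rw [hph_ne A hAe]; exact hpb A hA
    obtain ⟨x, hx⟩ := sandwich (O n).card (O n) ph b rfl hphsup hbsub hphpb hph0 hb0
    set g : V → ℝ := fun v => max (x v) 0 with hgdef
    have hgnn : ∀ v, 0 ≤ g v := fun v => le_max_right _ _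
    have hgub : ∀ A, A ⊆ O n → ∑ v ∈ A, g v ≤ b A := by
      intro A hA
      have hsplitA := Finset.sum_filter_add_sum_filter_not A (fun v => 0 ≤ x v) g
      have e7 : ∑ v ∈ A.filter (fun v => 0 ≤ x v), g v
          = ∑ v ∈ A.filter (fun v => 0 ≤ x v), x v := by
        apply Finset.sum_congr rfl
        intro v hv
        simp only [hgdef]
        exact max_eq_left (mem_filter.mp hv).2
      have e8 : ∑ v ∈ A.filter (fun v => ¬ 0 ≤ x v), g v = 0 := by
        apply Finset.sum_eq_zero
        intro v hv
        simp only [hgdef]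
        exact max_eq_right (le_of_not_ge (mem_filter.mp hv).2)
      have h9 := (hx (A.filter (fun v => 0 ≤ x v)) ((filter_subset _ _).trans hA)).2
      have h10 := hbmono (A.filter (fun v => 0 ≤ x v)) A (filter_subset _ _) hA
      linarith
    have hglb : ∀ A, A ⊆ O n → p A ≤ ∑ v ∈ A, g v := by
      intro A hA
      have h11 : ∑ v ∈ A, x v ≤ ∑ v ∈ A, g v :=
        Finset.sum_le_sum fun v _ => le_max_left _ _
      have h12 := (hx A hA).1
      by_cases hAe : A = ∅
      · subst hAe
        rw [sum_empty]
        exact hp0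
      · rw [hph_ne A hAe] at h12
        linarith
    -- the extended flow
    have hSout : S ∉ O n := fun hSn =>
      (Finset.disjoint_left.mp (hdisj 1 n (by omega)) (hS ▸ mem_singleton_self S)) hSn
    have hDout : D ∉ O n := fun hDn =>
      (Finset.disjoint_left.mp (hdisj n (n+1) (by omega)) hDn) (hD ▸ mem_singleton_self D)
    set f : V → ℝ := fun v => if v ∈ O n then g v else f' v with hfdef
    have hfin : ∀ v, v ∈ O n → f v = g v := by
      intro v hv; simp only [hfdef]; rw [if_pos hv]
    have hfout : ∀ v, v ∉ O n → f v = f' v := by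
      intro v hv; simp only [hfdef]; rw [if_neg hv]
    have hfnn : ∀ v, 0 ≤ f v := by
      intro v
      by_cases hv : v ∈ O n
      · rw [hfin v hv]; exact hgnn v
      · rw [hfout v hv]; exact hf'nn v
    have hsum_g : ∀ T : Finset V, T ⊆ O n → ∑ v ∈ T, f v = ∑ v ∈ T, g v :=
      fun T hT => Finset.sum_congr rfl fun v hv => hfin v (hT hv)
    have hsum_f' : ∀ (T : Finset V) (k : ℕ), k ≠ n → T ⊆ O k →
        ∑ v ∈ T, f v = ∑ v ∈ T, f' v :=
      fun T k hk hT => Finset.sum_congr rfl fun v hv =>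
        hfout v (fun hvn => (Finset.disjoint_left.mp (hdisj k n hk) (hT hv)) hvn)
    refine ⟨f, hfnn, ?_, ?_, ?_⟩
    · rw [hfout S hSout, hfout D hDout]
      exact hf'SD
    · intro l h1 h2 U hU W hW
      by_cases hln : l = n
      · rw [hln] at hU hW ⊢
        rw [hD] at hW
        rcases Finset.subset_singleton_iff.mp hW with rfl | rfl
        · rw [sum_empty]
          have h17 : (0:ℝ) ≤ ∑ v ∈ O n \ U, f v :=
            Finset.sum_nonneg fun v _ => hfnn v
          have h18 := hρnonneg n U ∅
          linarith
        · rw [sum_singleton, hfout D hDout, hsum_g (O n \ U) sdiff_subset]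
          have h14 := hglb (O n \ U) sdiff_subset
          simp only [hpdef] at h14
          rw [Finset.sdiff_sdiff_eq_self hU] at h14
          have hfd : f' D = f' S := hf'SD.symm
          linarith
      · by_cases hl1 : l = n - 1
        · subst hl1
          rw [hn1] at hW
          rw [hsum_g W hW, hsum_f' (O (n-1) \ U) (n-1) (by omega) sdiff_subset]
          have h15 := hgub W hW
          have h16 := hble W U hU
          linarith
        · have hl2 : l + 1 < n := by omega
          rw [hsum_f' W (l+1) (by omega) hW, hsum_f' (O l \ U) l (by omega) sdiff_subset]
          have hcon := hf'con l (by omega) (by omega) U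
            (by rw [hO'lt l (by omega)]; exact hU) W
            (by rw [hO'lt (l+1) hl2]; exact hW)
          rw [hρ'lt _ _ _ hl2, hO'lt l (by omega)] at hcon
          exact hcon
    · rw [hfout S hSout, hf'val]
      exact hcutEq

lemma telescope_Ico (a : ℕ → ℝ) : ∀ (L : ℕ), 1 ≤ L →
    ∑ l ∈ Finset.Ico 1 L, (a l - a (l + 1)) = a 1 - a L := by
  intro L hL
  induction L, hL using Nat.le_induction with
  | base => simp
  | succ n hn ihn =>
    rw [Finset.sum_Ico_succ_top hn, ihn]
    ring

/-- Feasible flows have constant layer totals. -/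
lemma layer_totals {L : ℕ} (hL : 2 ≤ L) {O : ℕ → Finset V} {S D : V}
    {ρ : ℕ → Finset V → Finset V → ℝ} {f : V → ℝ}
    (hS : O 1 = {S}) (hD : O L = {D}) (hfSD : f S = f D)
    (hempty : ∀ l, ∀ U W : Finset V, U = ∅ ∨ W = ∅ → ρ l U W = 0)
    (hcon : ∀ l, 1 ≤ l → l ≤ L - 1 → ∀ U ⊆ O l, ∀ W ⊆ O (l + 1),
        ∑ w ∈ W, f w - ∑ v ∈ O l \ U, f v ≤ ρ l U W) :
    ∀ l, 1 ≤ l → l ≤ L → ∑ v ∈ O l, f v = f S := by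
  have step : ∀ l, 1 ≤ l → l ≤ L - 1 → ∑ v ∈ O (l + 1), f v ≤ ∑ v ∈ O l, f v := by
    intro l h1 h2
    have := hcon l h1 h2 ∅ (empty_subset _) (O (l + 1)) (Finset.Subset.refl _)
    rw [sdiff_empty, hempty l ∅ (O (l + 1)) (Or.inl rfl)] at this
    linarith
  -- monotone decrease over intervals
  have down : ∀ j l, 1 ≤ l → l + j ≤ L → ∑ v ∈ O (l + j), f v ≤ ∑ v ∈ O l, f v := by
    intro j
    induction j with
    | zero => intro l _ _; exact le_refl _
    | succ j ihj =>
      intro l h1 h2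
      have h3 : l + j ≤ L - 1 := by omega
      have := step (l + j) (by omega) h3
      have h4 := ihj l h1 (by omega)
      calc ∑ v ∈ O (l + (j + 1)), f v = ∑ v ∈ O ((l + j) + 1), f v := by ring_nf
        _ ≤ ∑ v ∈ O (l + j), f v := this
        _ ≤ ∑ v ∈ O l, f v := h4
  intro l h1 h2
  have hup : ∑ v ∈ O l, f v ≤ ∑ v ∈ O 1, f v := by
    have := down (l - 1) 1 (le_refl _) (by omega)
    rwa [show 1 + (l - 1) = l by omega] at this
  have hdn : ∑ v ∈ O L, f v ≤ ∑ v ∈ O l, f v := by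
    have := down (L - l) l h1 (by omega)
    rwa [show l + (L - l) = L by omega] at this
  rw [hS, sum_singleton] at hup
  rw [hD, sum_singleton, ← hfSD] at hdn
  linarith

/-- Weak duality: any feasible flow value is at most any cut value. -/
lemma weak_duality {L : ℕ} (hL : 2 ≤ L) {O : ℕ → Finset V} {S D : V}
    {ρ : ℕ → Finset V → Finset V → ℝ} {f : V → ℝ} {Ωs : Finset V}
    (hS : O 1 = {S}) (hD : O L = {D}) (hfSD : f S = f D)
    (hempty : ∀ l, ∀ U W : Finset V, U = ∅ ∨ W = ∅ → ρ l U W = 0)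
    (hcon : ∀ l, 1 ≤ l → l ≤ L - 1 → ∀ U ⊆ O l, ∀ W ⊆ O (l + 1),
        ∑ w ∈ W, f w - ∑ v ∈ O l \ U, f v ≤ ρ l U W)
    (hSΩ : S ∈ Ωs) (hDΩ : D ∉ Ωs) :
    f S ≤ ∑ l ∈ Finset.Ico 1 L, ρ l (Ωs ∩ O l) (O (l + 1) \ Ωs) := by
  have htot := layer_totals hL hS hD hfSD hempty hcon
  set a : ℕ → ℝ := fun l => ∑ v ∈ Ωs ∩ O l, f v with ha
  have ha1 : a 1 = f S := by
    rw [ha]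
    simp only [hS]
    rw [Finset.inter_singleton_of_mem hSΩ, sum_singleton]
  have haL : a L = 0 := by
    rw [ha]
    simp only [hD]
    rw [Finset.inter_singleton_of_notMem hDΩ, sum_empty]
  have key : ∀ l ∈ Finset.Ico 1 L, a l - a (l + 1) ≤ ρ l (Ωs ∩ O l) (O (l + 1) \ Ωs) := by
    intro l hl
    rw [Finset.mem_Ico] at hl
    have hcon' := hcon l hl.1 (by omega) (Ωs ∩ O l) (inter_subset_right)
        (O (l + 1) \ Ωs) (sdiff_subset)
    have e1 : O (l + 1) \ Ωs = O (l + 1) \ (Ωs ∩ O (l + 1)) := by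
      ext x; simp only [mem_sdiff, mem_inter]; tauto
    have e2 : ∑ w ∈ O (l + 1) \ Ωs, f w = ∑ v ∈ O (l + 1), f v - a (l + 1) := by
      rw [e1, ha]
      have := Finset.sum_sdiff (f := f) (inter_subset_right : Ωs ∩ O (l+1) ⊆ O (l+1))
      linarith
    have e3 : ∑ v ∈ O l \ (Ωs ∩ O l), f v = ∑ v ∈ O l, f v - a l := by
      rw [ha]
      have := Finset.sum_sdiff (f := f) (inter_subset_right : Ωs ∩ O l ⊆ O l)
      linarith
    rw [e2, e3, htot l hl.1 (by omega), htot (l + 1) (by omega) (by omega)] at hcon'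
    linarith
  calc f S = a 1 - a L := by rw [ha1, haL]; ring
    _ = ∑ l ∈ Finset.Ico 1 L, (a l - a (l + 1)) := (telescope_Ico a L (by omega)).symm
    _ ≤ _ := Finset.sum_le_sum key

end Aux


/-- Max-flow min-cut for single-commodity node-flows on a layered graph with
bisubmodular, non-decreasing capacity functions vanishing on empty arguments. -/
theorem stmt7 {V : Type*} [Fintype V] [DecidableEq V] (L : ℕ) (hL : 2 ≤ L)
    (O : ℕ → Finset V)
    (hdisj : ∀ i j, i ≠ j → Disjoint (O i) (O j))
    (hcover : ∀ v : V, ∃ l, 1 ≤ l ∧ l ≤ L ∧ v ∈ O l)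
    (S D : V) (hS : O 1 = {S}) (hD : O L = {D})
    (ρ : ℕ → Finset V → Finset V → ℝ)
    (hρnonneg : ∀ l U W, 0 ≤ ρ l U W)
    (hbi : ∀ l, ∀ U₁ U₂ W₁ W₂ : Finset V, U₁ ⊆ O l → U₂ ⊆ O l →
      W₁ ⊆ O (l + 1) → W₂ ⊆ O (l + 1) →
      ρ l (U₁ ∪ U₂) (W₁ ∩ W₂) + ρ l (U₁ ∩ U₂) (W₁ ∪ W₂) ≤ ρ l U₁ W₁ + ρ l U₂ W₂)
    (hmono : ∀ l, ∀ U U₁ W W₁ : Finset V, U ⊆ U₁ → W ⊆ W₁ → U₁ ⊆ O l → W₁ ⊆ O (l + 1) →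
      ρ l U W ≤ ρ l U₁ W₁)
    (hempty : ∀ l, ∀ U W : Finset V, U = ∅ ∨ W = ∅ → ρ l U W = 0) :
    IsGreatest
      {r : ℝ | ∃ f : V → ℝ, (∀ v, 0 ≤ f v) ∧ f S = f D ∧
        (∀ l, 1 ≤ l → l ≤ L - 1 → ∀ U ⊆ O l, ∀ W ⊆ O (l + 1),
          ∑ w ∈ W, f w - ∑ v ∈ O l \ U, f v ≤ ρ l U W) ∧ f S = r}
      (sInf {c : ℝ | ∃ Ωs : Finset V, S ∈ Ωs ∧ D ∉ Ωs ∧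
        c = ∑ l ∈ Finset.Ico 1 L, ρ l (Ωs ∩ O l) (O (l + 1) \ Ωs)}) := by
  have hSD : S ≠ D := by
    intro h
    have hd := hdisj 1 L (by omega)
    rw [hS, hD, ← h] at hd
    exact (Finset.disjoint_singleton.mp hd) rfl
  have hne : {c : ℝ | ∃ Ωs : Finset V, S ∈ Ωs ∧ D ∉ Ωs ∧
      c = ∑ l ∈ Finset.Ico 1 L, ρ l (Ωs ∩ O l) (O (l + 1) \ Ωs)}.Nonempty :=
    cut_nonempty ρ hSD
  obtain ⟨f, hfnn, hfSD, hfcon, hfval⟩ :=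
    flow_exists L hL O S D ρ hdisj hS hD hρnonneg hbi hmono hempty
  constructor
  · exact ⟨f, hfnn, hfSD, hfcon, hfval⟩
  · rintro r ⟨f₂, h2nn, h2SD, h2con, rfl⟩
    apply le_csInf hne
    rintro c ⟨Ω, hSΩ, hDΩ, rfl⟩
    exact weak_duality hL hS hD h2SD hempty h2con hSΩ hDΩ
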